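/- Let Γ be a coalgebra over a field k, let C be a finite-dimensional right Γ-comodule, and suppose that for an ascending chain of finite-dimensional subcoalgebras Γ_i with union Γ there are almost split sequences d_i : 0 → A_i → B_i → C → 0 in the category of Γ_i-comodules and morphisms d_i → d_{i+1} restricting to the identity on C. Then the connecting maps A_i → A_{i+1} and B_i → B_{i+1} are injective. -/

import Mathlib

open TensorProduct LinearMap

noncomputable section

universe u

section DualAlgebra

variable (k : Type u) [Field k]
variable (Γ : Type u) [AddCommGroup Γ] [Module k Γ] [Coalgebra k Γ]

/-- Convolution product on the dual algebra `D Γ = Hom_k(Γ, k)`: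
`(f * g)(γ) = Σ f(γ₍₁₎) g(γ₍₂₎)`. -/
def conv (f g : Module.Dual k Γ) : Module.Dual k Γ :=
  LinearMap.mul' k k ∘ₗ TensorProduct.map f g ∘ₗ Coalgebra.comul

/-- The right hit action `γ ↼ e = Σ e(γ₍₁₎) γ₍₂₎`, as a linear endomap of `Γ`. -/
def rhit (e : Module.Dual k Γ) : Γ →ₗ[k] Γ :=
  (TensorProduct.lid k Γ).toLinearMap ∘ₗ e.rTensor Γ ∘ₗ Coalgebra.comul

/-- The left hit action `e ⇀ γ = Σ γ₍₁₎ e(γ₍₂₎)`, as a linear endomap of `Γ`. -/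
def lhit (e : Module.Dual k Γ) : Γ →ₗ[k] Γ :=
  (TensorProduct.rid k Γ).toLinearMap ∘ₗ e.lTensor Γ ∘ₗ Coalgebra.comul

/-- A subspace `Λ ⊆ Γ` is a subcoalgebra if `Δ(Λ) ⊆ Λ ⊗ Λ`. -/
def IsSubcoalgebra (p : Submodule k Γ) : Prop :=
  ∀ x ∈ p, Coalgebra.comul (R := k) x ∈ LinearMap.range (TensorProduct.mapIncl p p)

end DualAlgebra

/-- A right `Γ`-comodule: a `k`-vector space with a coassociative counital coaction
`ρ : M → M ⊗ Γ`. -/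
structure RComod (k : Type u) [Field k] (Γ : Type u)
    [AddCommGroup Γ] [Module k Γ] [Coalgebra k Γ] where
  carrier : Type u
  [acg : AddCommGroup carrier]
  [mod : Module k carrier]
  coact : carrier →ₗ[k] carrier ⊗[k] Γ
  coassoc : (TensorProduct.assoc k carrier Γ Γ).toLinearMap ∘ₗ coact.rTensor Γ ∘ₗ coact
      = (Coalgebra.comul (R := k) (A := Γ)).lTensor carrier ∘ₗ coact
  counit_id : (TensorProduct.rid k carrier).toLinearMap ∘ₗ
      (Coalgebra.counit (R := k) (A := Γ)).lTensor carrier ∘ₗ coact = LinearMap.id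

attribute [instance] RComod.acg RComod.mod

variable {k : Type u} [Field k] {Γ : Type u} [AddCommGroup Γ] [Module k Γ] [Coalgebra k Γ]

/-- A morphism of right `Γ`-comodules. -/
@[ext] structure RComodHom (M N : RComod k Γ) where
  toFun : M.carrier →ₗ[k] N.carrier
  comm : N.coact ∘ₗ toFun = toFun.rTensor Γ ∘ₗ M.coact

/-- The identity comodule morphism. -/
def RComodHom.id (M : RComod k Γ) : RComodHom M M :=
  ⟨LinearMap.id, by simp⟩

/-- Composition of comodule morphisms. -/
def RComodHom.comp {M N P : RComod k Γ} (f : RComodHom N P) (g : RComodHom M N) :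
    RComodHom M P :=
  ⟨f.toFun ∘ₗ g.toFun, by
    ext x
    have hf := LinearMap.congr_fun f.comm (g.toFun x)
    have hg := LinearMap.congr_fun g.comm x
    simp only [LinearMap.comp_apply] at hf hg ⊢
    rw [hf, hg, ← LinearMap.comp_apply, ← LinearMap.rTensor_comp]⟩

/-- `g : B → C` is a split epimorphism of comodules. -/
def IsSplitEpi {B C : RComod k Γ} (g : RComodHom B C) : Prop :=
  ∃ s : RComodHom C B, g.comp s = RComodHom.id C

/-- `f : A → B` is a split monomorphism of comodules. -/
def IsSplitMono {A B : RComod k Γ} (f : RComodHom A B) : Prop :=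
  ∃ r : RComodHom B A, r.comp f = RComodHom.id A

/-- `0 → A →f B →g C → 0` is a short exact sequence of comodules. -/
structure IsExactSeq {A B C : RComod k Γ} (f : RComodHom A B) (g : RComodHom B C) : Prop where
  inj : Function.Injective f.toFun
  surj : Function.Surjective g.toFun
  exact : LinearMap.range f.toFun = LinearMap.ker g.toFun

/-- A comodule is indecomposable iff it is nonzero and its only idempotent
endomorphisms are `0` and the identity. -/
def Indecomposable (M : RComod k Γ) : Prop :=
  Nontrivial M.carrier ∧
    ∀ e : RComodHom M M, e.comp e = e → e = RComodHom.id M ∨ e.toFun = 0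

/-- The space of comodule morphisms `M → N`, as a subspace of the linear maps. -/
def homSubmodule (M N : RComod k Γ) : Submodule k (M.carrier →ₗ[k] N.carrier) where
  carrier := {f | N.coact ∘ₗ f = f.rTensor Γ ∘ₗ M.coact}
  add_mem' := by
    intro f g hf hg
    simp only [Set.mem_setOf_eq] at *
    rw [LinearMap.comp_add, hf, hg, LinearMap.rTensor_add, LinearMap.add_comp]
  zero_mem' := by simp
  smul_mem' := by
    intro c f hf
    simp only [Set.mem_setOf_eq] at *
    rw [LinearMap.comp_smul, hf, LinearMap.rTensor_smul, LinearMap.smul_comp]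

/-- A comodule is quasifinite if `Hom(F, M)` is finite-dimensional for every
finite-dimensional comodule `F`. -/
def Quasifinite (M : RComod k Γ) : Prop :=
  ∀ F : RComod k Γ, FiniteDimensional k F.carrier →
    FiniteDimensional k ↥(homSubmodule F M)

/-- `0 → A →f B →g C → 0` is an almost split (Auslander–Reiten) sequence. -/
structure IsAlmostSplit {A B C : RComod k Γ} (f : RComodHom A B) (g : RComodHom B C) :
    Prop where
  exact : IsExactSeq f g
  nonsplit : ¬ IsSplitEpi g
  indecA : Indecomposable A
  indecC : Indecomposable C
  lift : ∀ (X : RComod k Γ) (u : RComodHom X C), ¬ IsSplitEpi u →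
    ∃ h : RComodHom X B, g.comp h = u
  extend : ∀ (X : RComod k Γ) (v : RComodHom A X), ¬ IsSplitMono v →
    ∃ h : RComodHom B X, h.comp f = v

/-- `C` is projective in the category of right `Γ`-comodules. -/
def IsProjectiveComod (P : RComod k Γ) : Prop :=
  ∀ (B C : RComod k Γ) (g : RComodHom B C), Function.Surjective g.toFun →
    ∀ u : RComodHom P C, ∃ h : RComodHom P B, g.comp h = u

/-- A subspace of a comodule which is a subcomodule. -/
def IsSubcomodule (M : RComod k Γ) (p : Submodule k M.carrier) : Prop :=
  ∀ x ∈ p, M.coact x ∈ LinearMap.range (p.subtype.rTensor Γ)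

end


noncomputable section

variable {k : Type u} [Field k]

/-- `ι : Λ → Γ` is a morphism of coalgebras. -/
def IsCoalgebraHom {Λ Γ : Type u}
    [AddCommGroup Λ] [Module k Λ] [Coalgebra k Λ]
    [AddCommGroup Γ] [Module k Γ] [Coalgebra k Γ] (ι : Λ →ₗ[k] Γ) : Prop :=
  Coalgebra.comul (R := k) (A := Γ) ∘ₗ ι
      = TensorProduct.map ι ι ∘ₗ Coalgebra.comul (R := k) (A := Λ)
    ∧ Coalgebra.counit (R := k) (A := Γ) ∘ₗ ι = Coalgebra.counit (R := k) (A := Λ)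

/-- A linear map `φ : M → N` from a `Λ`-comodule to a `Γ`-comodule is a comodule map
along a coalgebra morphism `ι : Λ → Γ` if the coactions are intertwined. -/
def IsComodMapAlong {Λ Γ : Type u}
    [AddCommGroup Λ] [Module k Λ] [Coalgebra k Λ]
    [AddCommGroup Γ] [Module k Γ] [Coalgebra k Γ]
    (ι : Λ →ₗ[k] Γ) (M : RComod k Λ) (N : RComod k Γ)
    (φ : M.carrier →ₗ[k] N.carrier) : Prop :=
  N.coact ∘ₗ φ = TensorProduct.map φ ι ∘ₗ M.coact

section Helpers

variable {Γ : Type u} [AddCommGroup Γ] [Module k Γ]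

/-- If `z ∈ V ⊗ Γ` is killed by `φ ⊗ 1`, it comes from `ker φ ⊗ Γ`. -/
lemma mem_range_rTensor_ker {V W : Type u} [AddCommGroup V] [Module k V]
    [AddCommGroup W] [Module k W]
    (φ : V →ₗ[k] W) {z : V ⊗[k] Γ} (hz : φ.rTensor Γ z = 0) :
    z ∈ LinearMap.range ((LinearMap.ker φ).subtype.rTensor Γ) := by
  have hex := Module.Flat.rTensor_exact (R := k) Γ (LinearMap.exact_subtype_ker_map φ)
  obtain ⟨w, hw⟩ := (hex z).mp hz
  exact ⟨w, hw⟩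

/-- Naturality of the associator. -/
lemma assoc_naturality {M N : Type u} [AddCommGroup M] [Module k M]
    [AddCommGroup N] [Module k N] (φ : M →ₗ[k] N) :
    (TensorProduct.assoc k N Γ Γ).toLinearMap ∘ₗ ((φ.rTensor Γ).rTensor Γ)
      = (φ.rTensor (Γ ⊗[k] Γ)) ∘ₗ (TensorProduct.assoc k M Γ Γ).toLinearMap := by
  apply TensorProduct.ext_threefold
  intro x y z
  simp

/-- Naturality of the right unitor. -/
lemma rid_naturality {M N : Type u} [AddCommGroup M] [Module k M]
    [AddCommGroup N] [Module k N] (φ : M →ₗ[k] N) :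
    (TensorProduct.rid k N).toLinearMap ∘ₗ (φ.rTensor k)
      = φ ∘ₗ (TensorProduct.rid k M).toLinearMap := by
  apply TensorProduct.ext'
  intro x c
  simp

variable [Coalgebra k Γ]

/-- The quotient of a comodule by a subcomodule, as a comodule. -/
def quotRComod (M : RComod k Γ) (p : Submodule k M.carrier)
    (hp : ∀ x ∈ p, M.coact x ∈ LinearMap.range (p.subtype.rTensor Γ)) :
    RComod k Γ where
  carrier := M.carrier ⧸ p
  coact := p.liftQ ((p.mkQ.rTensor Γ) ∘ₗ M.coact) (by
    intro x hx
    obtain ⟨y, hy⟩ := hp x hx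
    have h0 : p.mkQ ∘ₗ p.subtype = 0 := by ext z; simp
    have : (p.mkQ.rTensor Γ) (M.coact x) = 0 := by
      rw [← hy, ← LinearMap.comp_apply, ← LinearMap.rTensor_comp, h0,
        LinearMap.rTensor_zero, LinearMap.zero_apply]
    simpa [LinearMap.mem_ker] using this)
  coassoc := by
    set Q := M.carrier ⧸ p
    set ρQ : Q →ₗ[k] Q ⊗[k] Γ := p.liftQ ((p.mkQ.rTensor Γ) ∘ₗ M.coact) _ with hρQ
    have key : ρQ ∘ₗ p.mkQ = (p.mkQ.rTensor Γ) ∘ₗ M.coact := Submodule.liftQ_mkQ _ _ _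
    refine LinearMap.ext fun q => ?_
    obtain ⟨x, rfl⟩ := p.mkQ_surjective q
    have hx : ρQ (p.mkQ x) = (p.mkQ.rTensor Γ) (M.coact x) := LinearMap.congr_fun key x
    simp only [LinearMap.comp_apply, hx]
    have h1 : (ρQ.rTensor Γ) ((p.mkQ.rTensor Γ) (M.coact x))
        = ((p.mkQ.rTensor Γ).rTensor Γ) ((M.coact.rTensor Γ) (M.coact x)) := by
      rw [← LinearMap.comp_apply, ← LinearMap.rTensor_comp, key,
        LinearMap.rTensor_comp, LinearMap.comp_apply]
    rw [h1]
    have h2 := LinearMap.congr_fun (assoc_naturality (Γ := Γ) p.mkQ)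
      ((M.coact.rTensor Γ) (M.coact x))
    simp only [LinearMap.comp_apply] at h2
    rw [h2]
    have h3 := LinearMap.congr_fun M.coassoc x
    simp only [LinearMap.comp_apply] at h3
    rw [h3]
    have h4 : (p.mkQ.rTensor (Γ ⊗[k] Γ)) ∘ₗ ((Coalgebra.comul (R := k) (A := Γ)).lTensor M.carrier)
        = ((Coalgebra.comul (R := k) (A := Γ)).lTensor Q) ∘ₗ (p.mkQ.rTensor Γ) := by
      rw [LinearMap.rTensor_comp_lTensor, LinearMap.lTensor_comp_rTensor]
    exact LinearMap.congr_fun h4 (M.coact x)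
  counit_id := by
    set Q := M.carrier ⧸ p
    set ρQ : Q →ₗ[k] Q ⊗[k] Γ := p.liftQ ((p.mkQ.rTensor Γ) ∘ₗ M.coact) _ with hρQ
    have key : ρQ ∘ₗ p.mkQ = (p.mkQ.rTensor Γ) ∘ₗ M.coact := Submodule.liftQ_mkQ _ _ _
    refine LinearMap.ext fun q => ?_
    obtain ⟨x, rfl⟩ := p.mkQ_surjective q
    have hx : ρQ (p.mkQ x) = (p.mkQ.rTensor Γ) (M.coact x) := LinearMap.congr_fun key x
    simp only [LinearMap.comp_apply, hx, LinearMap.id_apply]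
    have h4 : ((Coalgebra.counit (R := k) (A := Γ)).lTensor (M.carrier ⧸ p)) ∘ₗ (p.mkQ.rTensor Γ)
        = (p.mkQ.rTensor k) ∘ₗ ((Coalgebra.counit (R := k) (A := Γ)).lTensor M.carrier) := by
      rw [LinearMap.lTensor_comp_rTensor, LinearMap.rTensor_comp_lTensor]
    have h4' := LinearMap.congr_fun h4 (M.coact x)
    simp only [LinearMap.comp_apply] at h4'
    rw [h4']
    have h5 := LinearMap.congr_fun (rid_naturality (k := k) p.mkQ)
      (((Coalgebra.counit (R := k) (A := Γ)).lTensor M.carrier) (M.coact x))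
    simp only [LinearMap.comp_apply] at h5
    rw [h5]
    have h6 := LinearMap.congr_fun M.counit_id x
    simp only [LinearMap.comp_apply, LinearMap.id_apply] at h6
    rw [h6]

/-- The coaction of the quotient comodule intertwines the quotient map. -/
lemma quotRComod_coact_mkQ (M : RComod k Γ) (p : Submodule k M.carrier)
    (hp : ∀ x ∈ p, M.coact x ∈ LinearMap.range (p.subtype.rTensor Γ)) :
    (quotRComod M p hp).coact ∘ₗ p.mkQ = (p.mkQ.rTensor Γ) ∘ₗ M.coact :=
  Submodule.liftQ_mkQ _ _ _

/-- The quotient map as a comodule morphism. -/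
def quotRComodHom (M : RComod k Γ) (p : Submodule k M.carrier)
    (hp : ∀ x ∈ p, M.coact x ∈ LinearMap.range (p.subtype.rTensor Γ)) :
    RComodHom M (quotRComod M p hp) :=
  ⟨p.mkQ, quotRComod_coact_mkQ M p hp⟩

end Helpers

/-- Let `Γ = ∪ Γᵢ` be an ascending chain of finite-dimensional
subcoalgebras (given as coalgebras `G i` with injective coalgebra morphisms
`ι i : G i → G (i+1)`), let `C` be a finite-dimensional comodule (appearing as the
common right-hand term `C i` of all the sequences, the connecting maps `γ i` being
bijective, "the identity on C"), and let
`dᵢ : 0 → A i → B i → C i → 0` be almost split sequences in the categories of right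
`G i`-comodules, connected by morphisms of sequences `(α i, β i, γ i)` along `ι i`.
Then the connecting maps `α i : A i → A (i+1)` and `β i : B i → B (i+1)` are
injective. -/
theorem connecting_maps_of_almost_split_system_injective
    (G : ℕ → Type u) [∀ i, AddCommGroup (G i)] [∀ i, Module k (G i)]
    [∀ i, Coalgebra k (G i)] [∀ i, FiniteDimensional k (G i)]
    (ι : ∀ i, G i →ₗ[k] G (i + 1))
    (hιinj : ∀ i, Function.Injective (ι i))
    (hι : ∀ i, IsCoalgebraHom (k := k) (ι i))
    (A B C : ∀ i, RComod k (G i))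
    (f : ∀ i, RComodHom (A i) (B i)) (g : ∀ i, RComodHom (B i) (C i))
    (halm : ∀ i, IsAlmostSplit (f i) (g i))
    (hCfd : ∀ i, FiniteDimensional k (C i).carrier)
    (α : ∀ i, (A i).carrier →ₗ[k] (A (i + 1)).carrier)
    (β : ∀ i, (B i).carrier →ₗ[k] (B (i + 1)).carrier)
    (γ : ∀ i, (C i).carrier →ₗ[k] (C (i + 1)).carrier)
    (hα : ∀ i, IsComodMapAlong (k := k) (ι i) (A i) (A (i + 1)) (α i))
    (hβ : ∀ i, IsComodMapAlong (k := k) (ι i) (B i) (B (i + 1)) (β i))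
    (hγ : ∀ i, IsComodMapAlong (k := k) (ι i) (C i) (C (i + 1)) (γ i))
    (hγbij : ∀ i, Function.Bijective (γ i))
    (hcomm1 : ∀ i, β i ∘ₗ (f i).toFun = (f (i + 1)).toFun ∘ₗ α i)
    (hcomm2 : ∀ i, γ i ∘ₗ (g i).toFun = (g (i + 1)).toFun ∘ₗ β i) :
    ∀ i, Function.Injective (α i) ∧ Function.Injective (β i) := by
  have hαinj : ∀ i, Function.Injective (α i) := by
    intro i
    by_contra hni
    have hK : LinearMap.ker (α i) ≠ ⊥ := fun hh => hni (LinearMap.ker_eq_bot.mp hh)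
    obtain ⟨x0, hx0K, hx00⟩ := Submodule.exists_mem_ne_zero_of_ne_bot hK
    set K := LinearMap.ker (α i) with hKdef
    -- `K` is a subcomodule of `A i`
    have hsub : ∀ x ∈ K, (A i).coact x ∈ LinearMap.range (K.subtype.rTensor (G i)) := by
      intro x hx
      have hαe : (A (i+1)).coact ∘ₗ α i
          = TensorProduct.map (α i) (ι i) ∘ₗ (A i).coact := hα i
      have h1 : TensorProduct.map (α i) (ι i) ((A i).coact x) = 0 := by
        have h := LinearMap.congr_fun hαe x
        simp only [LinearMap.comp_apply] at h
        rw [← h]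
        have hx0 : α i x = 0 := hx
        rw [hx0, map_zero]
      have h2 : ((ι i).lTensor (A (i+1)).carrier)
          (((α i).rTensor (G i)) ((A i).coact x)) = 0 := by
        rw [← LinearMap.comp_apply, LinearMap.lTensor_comp_rTensor]
        exact h1
      have h3 : ((α i).rTensor (G i)) ((A i).coact x) = 0 := by
        have hinj := Module.Flat.lTensor_preserves_injective_linearMap
          (M := (A (i+1)).carrier) (ι i) (hιinj i)
        apply hinj
        rw [h2, map_zero]
      exact mem_range_rTensor_ker (α i) h3
    set Abar := quotRComod (A i) K hsub with hAbardef
    set π : RComodHom (A i) Abar := quotRComodHom (A i) K hsub with hπdef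
    -- π is not a split mono
    have hπns : ¬ IsSplitMono π := by
      rintro ⟨r, hr⟩
      have hr' : r.toFun ∘ₗ K.mkQ = LinearMap.id := congrArg RComodHom.toFun hr
      have h0 : K.mkQ x0 = 0 := by
        rw [Submodule.mkQ_apply, Submodule.Quotient.mk_eq_zero]
        exact hx0K
      refine hx00 ?_
      calc x0 = r.toFun (K.mkQ x0) := by
            have hx := LinearMap.congr_fun hr' x0
            exact hx.symm
        _ = r.toFun 0 := by rw [h0]; rfl
        _ = 0 := map_zero _
    obtain ⟨h, hh⟩ := (halm i).extend Abar π hπns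
    have hhf : h.toFun ∘ₗ (f i).toFun = K.mkQ := congrArg RComodHom.toFun hh
    set abar : Abar.carrier →ₗ[k] (A (i+1)).carrier := K.liftQ (α i) le_rfl with habardef
    have habar : abar ∘ₗ K.mkQ = α i := Submodule.liftQ_mkQ _ _ _
    have hcoactQ : Abar.coact ∘ₗ K.mkQ = (K.mkQ.rTensor (G i)) ∘ₗ (A i).coact :=
      quotRComod_coact_mkQ (A i) K hsub
    -- abar is a comodule map along ι
    have habar_comm : (A (i+1)).coact ∘ₗ abar
        = TensorProduct.map abar (ι i) ∘ₗ Abar.coact := by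
      refine (LinearMap.cancel_right K.mkQ_surjective).1 ?_
      refine LinearMap.ext fun x => ?_
      change (A (i+1)).coact (abar (K.mkQ x)) = TensorProduct.map abar (ι i) (Abar.coact (K.mkQ x))
      have e1 : abar (K.mkQ x) = α i x := LinearMap.congr_fun habar x
      have e2 : Abar.coact (K.mkQ x) = K.mkQ.rTensor (G i) ((A i).coact x) :=
        LinearMap.congr_fun hcoactQ x
      have e3 : (A (i+1)).coact (α i x) = TensorProduct.map (α i) (ι i) ((A i).coact x) :=
        LinearMap.congr_fun (hα i) x
      rw [e1, e2, e3]
      induction ((A i).coact x) using TensorProduct.induction_on with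
      | zero => simp only [map_zero]; exact (map_zero _).symm
      | tmul a b => rfl
      | add y z hy hz => simp only [map_add, hy, hz]; exact (map_add _ _ _).symm
    set δ : (B i).carrier →ₗ[k] (B (i+1)).carrier :=
      β i - (f (i+1)).toFun ∘ₗ abar ∘ₗ h.toFun with hδdef
    have hc2 : (B (i+1)).coact ∘ₗ ((f (i+1)).toFun ∘ₗ abar ∘ₗ h.toFun)
        = TensorProduct.map ((f (i+1)).toFun ∘ₗ abar ∘ₗ h.toFun) (ι i) ∘ₗ (B i).coact := by
      calc (B (i+1)).coact ∘ₗ ((f (i+1)).toFun ∘ₗ abar ∘ₗ h.toFun)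
          = ((B (i+1)).coact ∘ₗ (f (i+1)).toFun) ∘ₗ abar ∘ₗ h.toFun := by
            simp only [LinearMap.comp_assoc]
        _ = ((f (i+1)).toFun.rTensor (G (i+1)) ∘ₗ (A (i+1)).coact) ∘ₗ abar ∘ₗ h.toFun := by
            rw [(f (i+1)).comm]
        _ = (f (i+1)).toFun.rTensor (G (i+1)) ∘ₗ ((A (i+1)).coact ∘ₗ abar) ∘ₗ h.toFun := by
            simp only [LinearMap.comp_assoc]
        _ = (f (i+1)).toFun.rTensor (G (i+1))
              ∘ₗ (TensorProduct.map abar (ι i) ∘ₗ Abar.coact) ∘ₗ h.toFun := by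
            rw [habar_comm]
        _ = (f (i+1)).toFun.rTensor (G (i+1)) ∘ₗ TensorProduct.map abar (ι i)
              ∘ₗ (Abar.coact ∘ₗ h.toFun) := by
            simp only [LinearMap.comp_assoc]
        _ = (f (i+1)).toFun.rTensor (G (i+1)) ∘ₗ TensorProduct.map abar (ι i)
              ∘ₗ (h.toFun.rTensor (G i) ∘ₗ (B i).coact) := by
            rw [h.comm]
        _ = (((f (i+1)).toFun.rTensor (G (i+1)) ∘ₗ TensorProduct.map abar (ι i))
              ∘ₗ h.toFun.rTensor (G i)) ∘ₗ (B i).coact := by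
            simp only [LinearMap.comp_assoc]
        _ = TensorProduct.map ((f (i+1)).toFun ∘ₗ abar ∘ₗ h.toFun) (ι i) ∘ₗ (B i).coact := by
            rw [LinearMap.rTensor_comp_map, LinearMap.map_comp_rTensor,
              LinearMap.comp_assoc]
    have hmapsub : TensorProduct.map δ (ι i)
        = TensorProduct.map (β i) (ι i)
          - TensorProduct.map ((f (i+1)).toFun ∘ₗ abar ∘ₗ h.toFun) (ι i) := by
      rw [hδdef, ← LinearMap.lTensor_comp_rTensor, LinearMap.rTensor_sub,
        LinearMap.comp_sub, LinearMap.lTensor_comp_rTensor, LinearMap.lTensor_comp_rTensor]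
    have hδcomm : (B (i+1)).coact ∘ₗ δ = TensorProduct.map δ (ι i) ∘ₗ (B i).coact := by
      have hβe : (B (i+1)).coact ∘ₗ β i
          = TensorProduct.map (β i) (ι i) ∘ₗ (B i).coact := hβ i
      rw [hδdef, LinearMap.comp_sub, hβe, hc2, hmapsub, LinearMap.sub_comp]
    have hδf : δ ∘ₗ (f i).toFun = 0 := by
      have hXf : ((f (i+1)).toFun ∘ₗ abar ∘ₗ h.toFun) ∘ₗ (f i).toFun
          = (f (i+1)).toFun ∘ₗ α i := by
        simp only [LinearMap.comp_assoc, hhf]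
        rw [habar]
      rw [hδdef, LinearMap.sub_comp, hcomm1 i, hXf, sub_self]
    obtain ⟨s₀, hs₀⟩ := (g i).toFun.exists_rightInverse_of_surjective
      (LinearMap.range_eq_top.mpr (halm i).exact.surj)
    set τ : (C i).carrier →ₗ[k] (B (i+1)).carrier := δ ∘ₗ s₀ with hτdef
    have hτcomm : (B (i+1)).coact ∘ₗ τ = TensorProduct.map τ (ι i) ∘ₗ (C i).coact := by
      have hex : Function.Exact ((f i).toFun.rTensor (G i)) ((g i).toFun.rTensor (G i)) :=
        Module.Flat.rTensor_exact (R := k) (G i)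
          (LinearMap.exact_iff.mpr (halm i).exact.exact.symm)
      refine LinearMap.ext fun c => ?_
      simp only [LinearMap.comp_apply]
      set z := (B i).coact (s₀ c) - (s₀.rTensor (G i)) ((C i).coact c) with hzdef
      have hz0 : ((g i).toFun.rTensor (G i)) z = 0 := by
        rw [hzdef, map_sub]
        have e1 : ((g i).toFun.rTensor (G i)) ((B i).coact (s₀ c))
            = (C i).coact ((g i).toFun (s₀ c)) := by
          have hcg := LinearMap.congr_fun (g i).comm (s₀ c)
          simp only [LinearMap.comp_apply] at hcg
          rw [hcg]
        have e2 : (g i).toFun (s₀ c) = c := by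
          have := LinearMap.congr_fun hs₀ c
          simpa using this
        have e3 : ((g i).toFun.rTensor (G i)) ((s₀.rTensor (G i)) ((C i).coact c))
            = (C i).coact c := by
          rw [← LinearMap.comp_apply, ← LinearMap.rTensor_comp, hs₀,
            LinearMap.rTensor_id, LinearMap.id_apply]
        rw [e1, e2, e3, sub_self]
      obtain ⟨w, hw⟩ := (hex z).mp hz0
      have hsplit : (B i).coact (s₀ c)
          = (s₀.rTensor (G i)) ((C i).coact c) + ((f i).toFun.rTensor (G i)) w := by
        rw [hw, hzdef]
        abel
      have hδc := LinearMap.congr_fun hδcomm (s₀ c)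
      simp only [LinearMap.comp_apply] at hδc
      have hτc : τ c = δ (s₀ c) := rfl
      rw [hτc, hδc, hsplit, map_add]
      have k1 : TensorProduct.map δ (ι i) ((s₀.rTensor (G i)) ((C i).coact c))
          = TensorProduct.map τ (ι i) ((C i).coact c) := by
        rw [← LinearMap.comp_apply, LinearMap.map_comp_rTensor, ← hτdef]
      have k2 : TensorProduct.map δ (ι i) (((f i).toFun.rTensor (G i)) w) = 0 := by
        rw [← LinearMap.comp_apply, LinearMap.map_comp_rTensor, hδf,
          TensorProduct.map_zero_left, LinearMap.zero_apply]
      rw [k1, k2, add_zero]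
    have hg'f' : (g (i+1)).toFun ∘ₗ (f (i+1)).toFun = 0 := by
      refine LinearMap.ext fun a => ?_
      have hmem : (f (i+1)).toFun a ∈ LinearMap.ker (g (i+1)).toFun := by
        rw [← (halm (i+1)).exact.exact]
        exact LinearMap.mem_range_self _ a
      simpa [LinearMap.mem_ker] using hmem
    have hτg : (g (i+1)).toFun ∘ₗ τ = γ i := by
      have hgδ : (g (i+1)).toFun ∘ₗ δ = γ i ∘ₗ (g i).toFun := by
        have hz : (g (i+1)).toFun ∘ₗ ((f (i+1)).toFun ∘ₗ abar ∘ₗ h.toFun) = 0 := by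
          rw [← LinearMap.comp_assoc, hg'f', LinearMap.zero_comp]
        rw [hδdef, LinearMap.comp_sub, ← hcomm2 i, hz, sub_zero]
      rw [hτdef, ← LinearMap.comp_assoc, hgδ, LinearMap.comp_assoc, hs₀,
        LinearMap.comp_id]
    set e : (C i).carrier ≃ₗ[k] (C (i+1)).carrier :=
      LinearEquiv.ofBijective (γ i) (hγbij i) with hedef
    set σf : (C (i+1)).carrier →ₗ[k] (B (i+1)).carrier :=
      τ ∘ₗ (e.symm : (C (i+1)).carrier →ₗ[k] (C i).carrier) with hσdef
    have hσγ : ∀ c, σf (γ i c) = τ c := by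
      intro c
      have hsy : e.symm (γ i c) = c := e.symm_apply_apply c
      simp only [hσdef, LinearMap.comp_apply, LinearEquiv.coe_coe, hsy]
    have hσcomm : (B (i+1)).coact ∘ₗ σf
        = σf.rTensor (G (i+1)) ∘ₗ (C (i+1)).coact := by
      refine LinearMap.ext fun c' => ?_
      obtain ⟨c, rfl⟩ := (hγbij i).2 c'
      simp only [LinearMap.comp_apply]
      rw [hσγ c]
      have h2 := LinearMap.congr_fun
        (hγ i : (C (i+1)).coact ∘ₗ γ i = TensorProduct.map (γ i) (ι i) ∘ₗ (C i).coact) c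
      simp only [LinearMap.comp_apply] at h2
      rw [h2, ← LinearMap.comp_apply (σf.rTensor (G (i+1))), LinearMap.rTensor_comp_map]
      have hσγc : σf ∘ₗ γ i = τ := LinearMap.ext hσγ
      rw [hσγc]
      have := LinearMap.congr_fun hτcomm c
      simp only [LinearMap.comp_apply] at this
      exact this
    have hsec : (g (i+1)).comp ⟨σf, hσcomm⟩ = RComodHom.id (C (i+1)) := by
      apply RComodHom.ext
      show (g (i+1)).toFun ∘ₗ σf = LinearMap.id
      rw [hσdef, ← LinearMap.comp_assoc, hτg]
      refine LinearMap.ext fun c' => ?_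
      simp only [LinearMap.comp_apply, LinearEquiv.coe_coe, LinearMap.id_apply]
      exact e.apply_symm_apply c'
    exact (halm (i+1)).nonsplit ⟨⟨σf, hσcomm⟩, hsec⟩
  intro i
  refine ⟨hαinj i, ?_⟩
  intro b b' hb
  have hb0 : β i (b - b') = 0 := by rw [map_sub, hb, sub_self]
  have hg0 : γ i ((g i).toFun (b - b')) = 0 := by
    have hc := LinearMap.congr_fun (hcomm2 i) (b - b')
    simp only [LinearMap.comp_apply] at hc
    rw [hc, hb0, map_zero]
  have hgb : (g i).toFun (b - b') = 0 := by
    apply (hγbij i).1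
    rw [hg0, map_zero]
  have hmem : b - b' ∈ LinearMap.range (f i).toFun := by
    rw [(halm i).exact.exact]
    exact hgb
  obtain ⟨a, ha⟩ := hmem
  have hf'a : (f (i+1)).toFun (α i a) = 0 := by
    have h1 := LinearMap.congr_fun (hcomm1 i) a
    simp only [LinearMap.comp_apply] at h1
    rw [← h1, ha, hb0]
  have ha0 : α i a = 0 := by
    apply (halm (i+1)).exact.inj
    rw [hf'a, map_zero]
  have haz : a = 0 := by
    apply hαinj i
    rw [ha0, map_zero]
  have : b - b' = 0 := by rw [← ha, haz, map_zero]
  exact sub_eq_zero.mp this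

end
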